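/- For all jointly distributed random variables A, B, X, Y with finite ranges, I(A:B) ≤ I(A:B | X) + I(A:B | Y) + Δ, where Δ = log₂( Σ_{a,b,x,y : p(a,b,x)>0 and p(a,b,y)>0} p(a,x)·p(a,y)·p(b,x)·p(b,y) / ( p(a)·p(x)·p(y)·p(b) ) ). -/

import Mathlib

open Finset

noncomputable section

/-- Probability of an event under a distribution on a finite sample space. -/
def pr {Ω : Type*} [Fintype Ω] (p : Ω → ℝ) (E : Set Ω) : ℝ :=
  ∑ ω, E.indicator p ω

/-- `p` is a probability mass function on the finite sample space `Ω`. -/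
def IsPMF {Ω : Type*} [Fintype Ω] (p : Ω → ℝ) : Prop :=
  (∀ ω, 0 ≤ p ω) ∧ ∑ ω, p ω = 1

/-- Shannon entropy (base 2) of a random variable `V` on a finite sample space. -/
def ent {Ω β : Type*} [Fintype Ω] [Fintype β] (p : Ω → ℝ) (V : Ω → β) : ℝ :=
  -∑ v, pr p {ω | V ω = v} * Real.logb 2 (pr p {ω | V ω = v})

/-- Conditional Shannon entropy (base 2): `H(V | W)`. -/
def condEnt {Ω β γ : Type*} [Fintype Ω] [Fintype β] [Fintype γ]
    (p : Ω → ℝ) (V : Ω → β) (W : Ω → γ) : ℝ :=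
  ent p (fun ω => (V ω, W ω)) - ent p W

/-- Mutual information (base 2): `I(V : W)`. -/
def mi {Ω β γ : Type*} [Fintype Ω] [Fintype β] [Fintype γ]
    (p : Ω → ℝ) (V : Ω → β) (W : Ω → γ) : ℝ :=
  ent p V + ent p W - ent p (fun ω => (V ω, W ω))

/-- Conditional mutual information (base 2): `I(V : W | U)`. -/
def cmi {Ω β γ δ : Type*} [Fintype Ω] [Fintype β] [Fintype γ] [Fintype δ]
    (p : Ω → ℝ) (V : Ω → β) (W : Ω → γ) (U : Ω → δ) : ℝ :=
  ent p (fun ω => (V ω, U ω)) + ent p (fun ω => (W ω, U ω))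
    - ent p (fun ω => (V ω, W ω, U ω)) - ent p U

end

section ZYhelpers

open scoped Classical

variable {Ω : Type*} [Fintype Ω] {p : Ω → ℝ}

lemma pr_eq_sum_ite (p : Ω → ℝ) (E : Set Ω) :
    pr p E = ∑ ω, if ω ∈ E then p ω else 0 := by
  simp [pr, Set.indicator_apply]

lemma pr_nonneg (hp : ∀ ω, 0 ≤ p ω) (E : Set Ω) : 0 ≤ pr p E := by
  rw [pr_eq_sum_ite]
  exact Finset.sum_nonneg fun ω _ => by split <;> simp [hp ω]

lemma pr_mono (hp : ∀ ω, 0 ≤ p ω) {E F : Set Ω} (h : E ⊆ F) : pr p E ≤ pr p F := by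
  rw [pr_eq_sum_ite, pr_eq_sum_ite]
  refine Finset.sum_le_sum fun ω _ => ?_
  by_cases hE : ω ∈ E
  · simp [hE, h hE]
  · simp only [hE, if_false]
    split <;> simp [hp ω]

lemma sum_pr_mul {β : Type*} [Fintype β] (p : Ω → ℝ) (V : Ω → β) (f : β → ℝ) :
    ∑ v, pr p {ω | V ω = v} * f v = ∑ ω, p ω * f (V ω) := by
  simp only [pr_eq_sum_ite, Set.mem_setOf_eq, Finset.sum_mul]
  rw [Finset.sum_comm]
  refine Finset.sum_congr rfl fun ω _ => ?_
  simp [ite_mul]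

lemma ent_eq_sum {β : Type*} [Fintype β] (p : Ω → ℝ) (V : Ω → β) :
    ent p V = -∑ ω, p ω * Real.logb 2 (pr p {ω' | V ω' = V ω}) := by
  rw [ent, ← sum_pr_mul p V (fun v => Real.logb 2 (pr p {ω | V ω = v}))]

lemma sum_pr_and {γ : Type*} [Fintype γ] (p : Ω → ℝ) (P : Ω → Prop) (W : Ω → γ) :
    ∑ v, pr p {ω | P ω ∧ W ω = v} = pr p {ω | P ω} := by
  simp only [pr_eq_sum_ite, Set.mem_setOf_eq]
  rw [Finset.sum_comm]
  refine Finset.sum_congr rfl fun ω _ => ?_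
  by_cases h : P ω <;> simp [h]

lemma sum_pr_total (hp1 : ∑ ω, p ω = 1) {γ : Type*} [Fintype γ] (W : Ω → γ) :
    ∑ v, pr p {ω | W ω = v} = 1 := by
  simp only [pr_eq_sum_ite, Set.mem_setOf_eq]
  rw [Finset.sum_comm, ← hp1]
  exact Finset.sum_congr rfl fun ω _ => by simp

lemma pr_pair {β γ : Type*} [Fintype Ω] (p : Ω → ℝ) (U : Ω → β) (V : Ω → γ) (u : β) (v : γ) :
    pr p {ω | (U ω, V ω) = (u, v)} = pr p {ω | U ω = u ∧ V ω = v} := by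
  congr 1
  ext ω
  simp [Prod.ext_iff]

lemma pr_triple {β γ δ : Type*} (p : Ω → ℝ) (U : Ω → β) (V : Ω → γ) (T : Ω → δ)
    (u : β) (v : γ) (t : δ) :
    pr p {ω | (U ω, V ω, T ω) = (u, v, t)} = pr p {ω | U ω = u ∧ V ω = v ∧ T ω = t} := by
  congr 1
  ext ω
  simp [Prod.ext_iff]

lemma pr_quad {β γ δ ε : Type*} (p : Ω → ℝ) (U : Ω → β) (V : Ω → γ) (T : Ω → δ) (S : Ω → ε)
    (u : β) (v : γ) (t : δ) (s : ε) :
    pr p {ω | (U ω, V ω, T ω, S ω) = (u, v, t, s)} =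
      pr p {ω | U ω = u ∧ V ω = v ∧ T ω = t ∧ S ω = s} := by
  congr 1
  ext ω
  simp [Prod.ext_iff, and_assoc]

lemma pr_pair_right {β γ δ : Type*} (p : Ω → ℝ) (U : Ω → β) (V : Ω → γ) (T : Ω → δ)
    (u : β) (v : γ) (t : δ) :
    pr p {ω | U ω = u ∧ (V ω, T ω) = (v, t)} = pr p {ω | U ω = u ∧ V ω = v ∧ T ω = t} := by
  congr 1
  ext ω
  simp [Prod.ext_iff]

lemma jensen_logb {ι : Type*} [Fintype ι] (w t : ι → ℝ) (hw0 : ∀ i, 0 ≤ w i)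
    (hw1 : ∑ i, w i = 1) (ht : ∀ i, 0 < w i → 0 < t i) :
    ∑ i, w i * Real.logb 2 (t i) ≤ Real.logb 2 (∑ i, w i * t i) := by
  set S : Finset ι := Finset.univ.filter (fun i => 0 < w i) with hS
  have hzero : ∀ i ∈ Finset.univ \ S, w i = 0 := by
    intro i hi
    simp only [hS, Finset.mem_sdiff, Finset.mem_filter, Finset.mem_univ, true_and] at hi
    exact le_antisymm (not_lt.1 hi) (hw0 i)
  have hsub : S ⊆ Finset.univ := Finset.subset_univ S
  have hwS : ∑ i ∈ S, w i = 1 := by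
    rw [← hw1]
    exact Finset.sum_subset hsub (fun i h1 h2 => hzero i (Finset.mem_sdiff.2 ⟨h1, h2⟩))
  have hA : ∑ i, w i * Real.logb 2 (t i) = ∑ i ∈ S, w i * Real.logb 2 (t i) := by
    refine (Finset.sum_subset hsub (fun i h1 h2 => ?_)).symm
    rw [hzero i (Finset.mem_sdiff.2 ⟨h1, h2⟩), zero_mul]
  have hB : ∑ i, w i * t i = ∑ i ∈ S, w i * t i := by
    refine (Finset.sum_subset hsub (fun i h1 h2 => ?_)).symm
    rw [hzero i (Finset.mem_sdiff.2 ⟨h1, h2⟩), zero_mul]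
  rw [hA, hB]
  have hmem : ∀ i ∈ S, t i ∈ Set.Ioi (0:ℝ) := by
    intro i hi
    simp only [hS, Finset.mem_filter] at hi
    exact ht i hi.2
  have hjen := (strictConcaveOn_log_Ioi.concaveOn).le_map_sum
    (t := S) (w := w) (p := t) (fun i _ => hw0 i) hwS hmem
  simp only [smul_eq_mul] at hjen
  have h2 : (0:ℝ) < Real.log 2 := Real.log_pos (by norm_num)
  simp only [Real.logb, ← mul_div_assoc]
  rw [← Finset.sum_div]
  exact div_le_div_of_nonneg_right hjen h2.le

end ZYhelpers

noncomputable section ZYdefs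

open scoped Classical

variable {Ω α β χ υ : Type*} [Fintype Ω] [Fintype α] [Fintype β] [Fintype χ] [Fintype υ]

/-- `log p(a,b) - log p(a) - log p(b)`. -/
def ZYH (p : Ω → ℝ) (A : Ω → α) (B : Ω → β) (a : α) (b : β) : ℝ :=
  Real.logb 2 (pr p {ω | A ω = a ∧ B ω = b}) - Real.logb 2 (pr p {ω | A ω = a})
    - Real.logb 2 (pr p {ω | B ω = b})

/-- `log p(a,x) + log p(b,x) - log p(a,b,x) - log p(x)`. -/
def ZYF (p : Ω → ℝ) (A : Ω → α) (B : Ω → β) (X : Ω → χ) (a : α) (b : β) (x : χ) : ℝ :=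
  Real.logb 2 (pr p {ω | A ω = a ∧ X ω = x}) + Real.logb 2 (pr p {ω | B ω = b ∧ X ω = x})
    - Real.logb 2 (pr p {ω | A ω = a ∧ B ω = b ∧ X ω = x}) - Real.logb 2 (pr p {ω | X ω = x})

/-- The auxiliary distribution `q(a,b,x,y) = p(a,b,x) p(a,b,y) / p(a,b)`. -/
def ZYQ (p : Ω → ℝ) (A : Ω → α) (B : Ω → β) (X : Ω → χ) (Y : Ω → υ)
    (a : α) (b : β) (x : χ) (y : υ) : ℝ :=
  if 0 < pr p {ω | A ω = a ∧ B ω = b} then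
    pr p {ω | A ω = a ∧ B ω = b ∧ X ω = x} * pr p {ω | A ω = a ∧ B ω = b ∧ Y ω = y}
      / pr p {ω | A ω = a ∧ B ω = b}
  else 0

/-- The ratio whose expectation is bounded by Jensen. -/
def ZYT (p : Ω → ℝ) (A : Ω → α) (B : Ω → β) (X : Ω → χ) (Y : Ω → υ)
    (a : α) (b : β) (x : χ) (y : υ) : ℝ :=
  pr p {ω | A ω = a ∧ B ω = b} * pr p {ω | A ω = a ∧ X ω = x} * pr p {ω | B ω = b ∧ X ω = x}
      * pr p {ω | A ω = a ∧ Y ω = y} * pr p {ω | B ω = b ∧ Y ω = y}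
    / (pr p {ω | A ω = a} * pr p {ω | B ω = b} * pr p {ω | A ω = a ∧ B ω = b ∧ X ω = x}
        * pr p {ω | X ω = x} * pr p {ω | A ω = a ∧ B ω = b ∧ Y ω = y} * pr p {ω | Y ω = y})

end ZYdefs

section ZYsplit

variable {α β χ υ : Type*} [Fintype α] [Fintype β] [Fintype χ] [Fintype υ]

lemma sum4_split (w : α → β → χ → υ → ℝ) (H : α → β → ℝ) (F : α → β → χ → ℝ)
    (G : α → β → υ → ℝ) (w2 : α → β → ℝ) (w3x : α → β → χ → ℝ) (w3y : α → β → υ → ℝ)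
    (hw2 : ∀ a b, ∑ x, ∑ y, w a b x y = w2 a b)
    (hwx : ∀ a b x, ∑ y, w a b x y = w3x a b x)
    (hwy : ∀ a b y, ∑ x, w a b x y = w3y a b y) :
    ∑ a, ∑ b, ∑ x, ∑ y, w a b x y * (H a b + F a b x + G a b y)
      = ∑ a, ∑ b, (w2 a b * H a b + (∑ x, w3x a b x * F a b x)
          + (∑ y, w3y a b y * G a b y)) := by
  refine Finset.sum_congr rfl fun a _ => Finset.sum_congr rfl fun b _ => ?_
  simp only [mul_add, Finset.sum_add_distrib]
  congr 1
  · congr 1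
    · -- ∑ x ∑ y w * H = w2 * H
      rw [← hw2 a b, Finset.sum_mul]
      exact Finset.sum_congr rfl fun x _ => by rw [Finset.sum_mul]
    · -- ∑ x ∑ y w * F x = ∑ x w3x * F
      refine Finset.sum_congr rfl fun x _ => ?_
      rw [← hwx a b x, Finset.sum_mul]
  · -- ∑ x ∑ y w * G y = ∑ y w3y * G
    rw [Finset.sum_comm]
    refine Finset.sum_congr rfl fun y _ => ?_
    rw [← hwy a b y, Finset.sum_mul]

lemma jensen_logb4 (w t : α → β → χ → υ → ℝ) (hw0 : ∀ a b x y, 0 ≤ w a b x y)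
    (hw1 : ∑ a, ∑ b, ∑ x, ∑ y, w a b x y = 1)
    (ht : ∀ a b x y, 0 < w a b x y → 0 < t a b x y) :
    ∑ a, ∑ b, ∑ x, ∑ y, w a b x y * Real.logb 2 (t a b x y)
      ≤ Real.logb 2 (∑ a, ∑ b, ∑ x, ∑ y, w a b x y * t a b x y) := by
  have := jensen_logb (ι := α × β × χ × υ)
    (fun v => w v.1 v.2.1 v.2.2.1 v.2.2.2) (fun v => t v.1 v.2.1 v.2.2.1 v.2.2.2)
    (fun v => hw0 _ _ _ _) (by simpa [Fintype.sum_prod_type] using hw1)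
    (fun v => ht _ _ _ _)
  simpa [Fintype.sum_prod_type] using this

end ZYsplit

open scoped Classical in
/-- Unconditional version of [ZY97] with error term `Δ`. -/
theorem stmt_5 {Ω α β χ υ : Type*}
    [Fintype Ω] [Fintype α] [Fintype β] [Fintype χ] [Fintype υ]
    (p : Ω → ℝ) (hp : IsPMF p)
    (A : Ω → α) (B : Ω → β) (X : Ω → χ) (Y : Ω → υ) :
    mi p A B ≤ cmi p A B X + cmi p A B Y +
      Real.logb 2 (∑ a : α, ∑ b : β, ∑ x : χ, ∑ y : υ,
        if 0 < pr p {ω | A ω = a ∧ B ω = b ∧ X ω = x} ∧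
           0 < pr p {ω | A ω = a ∧ B ω = b ∧ Y ω = y} then
          pr p {ω | A ω = a ∧ X ω = x} * pr p {ω | A ω = a ∧ Y ω = y}
            * pr p {ω | B ω = b ∧ X ω = x} * pr p {ω | B ω = b ∧ Y ω = y}
            / (pr p {ω | A ω = a} * pr p {ω | X ω = x} * pr p {ω | Y ω = y}
                * pr p {ω | B ω = b})
        else 0) := by
  obtain ⟨hp0, hp1⟩ := hp
  -- Step 1: decomposition of mi - cmi - cmi as a single sum over ω
  have hL1 : mi p A B - cmi p A B X - cmi p A B Y
      = ∑ ω, p ω * (ZYH p A B (A ω) (B ω) + ZYF p A B X (A ω) (B ω) (X ω)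
          + ZYF p A B Y (A ω) (B ω) (Y ω)) := by
    simp only [mi, cmi, ent_eq_sum, pr_pair, pr_triple, pr_pair_right, ZYH, ZYF, mul_add, mul_sub,
      Finset.sum_add_distrib, Finset.sum_sub_distrib]
    ring
  -- Step 2: regroup over values
  have hL2 : ∑ ω, p ω * (ZYH p A B (A ω) (B ω) + ZYF p A B X (A ω) (B ω) (X ω)
          + ZYF p A B Y (A ω) (B ω) (Y ω))
      = ∑ a, ∑ b, ∑ x, ∑ y, pr p {ω | A ω = a ∧ B ω = b ∧ X ω = x ∧ Y ω = y}
          * (ZYH p A B a b + ZYF p A B X a b x + ZYF p A B Y a b y) := by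
    rw [← sum_pr_mul p (fun ω => (A ω, B ω, X ω, Y ω))
      (fun v => ZYH p A B v.1 v.2.1 + ZYF p A B X v.1 v.2.1 v.2.2.1
        + ZYF p A B Y v.1 v.2.1 v.2.2.2)]
    simp [Fintype.sum_prod_type, pr_quad]

  -- marginal identities
  have hMy : ∀ a b x, ∑ y, pr p {ω | A ω = a ∧ B ω = b ∧ X ω = x ∧ Y ω = y}
      = pr p {ω | A ω = a ∧ B ω = b ∧ X ω = x} := by
    intro a b x
    rw [← sum_pr_and p (fun ω => A ω = a ∧ B ω = b ∧ X ω = x) Y]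
    refine Finset.sum_congr rfl fun y _ => ?_
    congr 1; ext ω; simp only [Set.mem_setOf_eq]; tauto
  have hMx : ∀ a b y, ∑ x, pr p {ω | A ω = a ∧ B ω = b ∧ X ω = x ∧ Y ω = y}
      = pr p {ω | A ω = a ∧ B ω = b ∧ Y ω = y} := by
    intro a b y
    rw [← sum_pr_and p (fun ω => A ω = a ∧ B ω = b ∧ Y ω = y) X]
    refine Finset.sum_congr rfl fun x _ => ?_
    congr 1; ext ω; simp only [Set.mem_setOf_eq]; tauto
  have hM3x : ∀ a b, ∑ x, pr p {ω | A ω = a ∧ B ω = b ∧ X ω = x}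
      = pr p {ω | A ω = a ∧ B ω = b} := by
    intro a b
    rw [← sum_pr_and p (fun ω => A ω = a ∧ B ω = b) X]
    refine Finset.sum_congr rfl fun x _ => ?_
    congr 1; ext ω; simp only [Set.mem_setOf_eq]; tauto
  have hM3y : ∀ a b, ∑ y, pr p {ω | A ω = a ∧ B ω = b ∧ Y ω = y}
      = pr p {ω | A ω = a ∧ B ω = b} := by
    intro a b
    rw [← sum_pr_and p (fun ω => A ω = a ∧ B ω = b) Y]
    refine Finset.sum_congr rfl fun y _ => ?_
    congr 1; ext ω; simp only [Set.mem_setOf_eq]; tauto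
  have hMxy : ∀ a b, ∑ x, ∑ y, pr p {ω | A ω = a ∧ B ω = b ∧ X ω = x ∧ Y ω = y}
      = pr p {ω | A ω = a ∧ B ω = b} := by
    intro a b
    simp only [hMy]
    exact hM3x a b
  have hM2 : ∑ a, ∑ b, pr p {ω | A ω = a ∧ B ω = b} = 1 := by
    have h1 : ∀ a, ∑ b, pr p {ω | A ω = a ∧ B ω = b} = pr p {ω | A ω = a} :=
      fun a => sum_pr_and p (fun ω => A ω = a) B
    simp only [h1]
    exact sum_pr_total hp1 A
  -- facts about Q
  have hQ0 : ∀ a b x y, 0 ≤ ZYQ p A B X Y a b x y := by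
    intro a b x y
    rw [ZYQ]
    split
    · exact div_nonneg (mul_nonneg (pr_nonneg hp0 _) (pr_nonneg hp0 _)) (pr_nonneg hp0 _)
    · exact le_refl 0
  have hsubX : ∀ a b x, {ω | A ω = a ∧ B ω = b ∧ X ω = x} ⊆ {ω | A ω = a ∧ B ω = b} :=
    fun a b x ω h => ⟨h.1, h.2.1⟩
  have hsubY : ∀ a b y, {ω | A ω = a ∧ B ω = b ∧ Y ω = y} ⊆ {ω | A ω = a ∧ B ω = b} :=
    fun a b y ω h => ⟨h.1, h.2.1⟩
  have hQy : ∀ a b x, ∑ y, ZYQ p A B X Y a b x y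
      = pr p {ω | A ω = a ∧ B ω = b ∧ X ω = x} := by
    intro a b x
    by_cases h2 : 0 < pr p {ω | A ω = a ∧ B ω = b}
    · simp only [ZYQ, if_pos h2, div_eq_mul_inv]
      rw [← Finset.sum_mul, ← Finset.mul_sum, hM3y a b, mul_assoc,
        mul_inv_cancel₀ h2.ne', mul_one]
    · have hz : pr p {ω | A ω = a ∧ B ω = b ∧ X ω = x} = 0 := by
        have hle := pr_mono hp0 (hsubX a b x)
        have hnn := pr_nonneg hp0 {ω | A ω = a ∧ B ω = b ∧ X ω = x}
        have h2' : pr p {ω | A ω = a ∧ B ω = b} ≤ 0 := not_lt.1 h2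
        linarith
      simp [ZYQ, h2, hz]
  have hQx : ∀ a b y, ∑ x, ZYQ p A B X Y a b x y
      = pr p {ω | A ω = a ∧ B ω = b ∧ Y ω = y} := by
    intro a b y
    by_cases h2 : 0 < pr p {ω | A ω = a ∧ B ω = b}
    · simp only [ZYQ, if_pos h2, div_eq_mul_inv]
      rw [← Finset.sum_mul, ← Finset.sum_mul, hM3x a b]
      rw [mul_comm (pr p {ω | A ω = a ∧ B ω = b}), mul_assoc,
        mul_inv_cancel₀ h2.ne', mul_one]
    · have hz : pr p {ω | A ω = a ∧ B ω = b ∧ Y ω = y} = 0 := by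
        have hle := pr_mono hp0 (hsubY a b y)
        have hnn := pr_nonneg hp0 {ω | A ω = a ∧ B ω = b ∧ Y ω = y}
        have h2' : pr p {ω | A ω = a ∧ B ω = b} ≤ 0 := not_lt.1 h2
        linarith
      simp [ZYQ, h2, hz]
  have hQ2 : ∀ a b, ∑ x, ∑ y, ZYQ p A B X Y a b x y = pr p {ω | A ω = a ∧ B ω = b} := by
    intro a b
    simp only [hQy]
    exact hM3x a b
  have hQ1 : ∑ a, ∑ b, ∑ x, ∑ y, ZYQ p A B X Y a b x y = 1 := by
    simp only [hQ2]
    exact hM2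
  -- swap the weights
  have hswap : ∑ a, ∑ b, ∑ x, ∑ y, pr p {ω | A ω = a ∧ B ω = b ∧ X ω = x ∧ Y ω = y}
        * (ZYH p A B a b + ZYF p A B X a b x + ZYF p A B Y a b y)
      = ∑ a, ∑ b, ∑ x, ∑ y, ZYQ p A B X Y a b x y
        * (ZYH p A B a b + ZYF p A B X a b x + ZYF p A B Y a b y) := by
    have e1 := sum4_split (fun a b x y => pr p {ω | A ω = a ∧ B ω = b ∧ X ω = x ∧ Y ω = y})
      (ZYH p A B) (ZYF p A B X) (ZYF p A B Y)
      (fun a b => pr p {ω | A ω = a ∧ B ω = b})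
      (fun a b x => pr p {ω | A ω = a ∧ B ω = b ∧ X ω = x})
      (fun a b y => pr p {ω | A ω = a ∧ B ω = b ∧ Y ω = y}) hMxy hMy hMx
    have e2 := sum4_split (ZYQ p A B X Y)
      (ZYH p A B) (ZYF p A B X) (ZYF p A B Y)
      (fun a b => pr p {ω | A ω = a ∧ B ω = b})
      (fun a b x => pr p {ω | A ω = a ∧ B ω = b ∧ X ω = x})
      (fun a b y => pr p {ω | A ω = a ∧ B ω = b ∧ Y ω = y}) hQ2 hQy hQx
    rw [e1, e2]
  -- positivity on the support of Q
  have hsupport : ∀ a b x y, 0 < ZYQ p A B X Y a b x y →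
      0 < pr p {ω | A ω = a ∧ B ω = b ∧ X ω = x} ∧
      0 < pr p {ω | A ω = a ∧ B ω = b ∧ Y ω = y} ∧
      0 < pr p {ω | A ω = a ∧ B ω = b} := by
    intro a b x y hq
    rw [ZYQ] at hq
    by_cases h2 : 0 < pr p {ω | A ω = a ∧ B ω = b}
    · rw [if_pos h2] at hq
      have hx : 0 < pr p {ω | A ω = a ∧ B ω = b ∧ X ω = x} := by
        rcases (pr_nonneg hp0 {ω | A ω = a ∧ B ω = b ∧ X ω = x}).lt_or_eq with h | h
        · exact h
        · exfalso; rw [← h, zero_mul, zero_div] at hq; exact lt_irrefl 0 hq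
      have hy : 0 < pr p {ω | A ω = a ∧ B ω = b ∧ Y ω = y} := by
        rcases (pr_nonneg hp0 {ω | A ω = a ∧ B ω = b ∧ Y ω = y}).lt_or_eq with h | h
        · exact h
        · exfalso; rw [← h, mul_zero, zero_div] at hq; exact lt_irrefl 0 hq
      exact ⟨hx, hy, h2⟩
    · rw [if_neg h2] at hq; exact absurd hq (lt_irrefl 0)
  -- subset facts for deriving positivity of marginals
  have hsA : ∀ a b x, {ω | A ω = a ∧ B ω = b ∧ X ω = x} ⊆ {ω | A ω = a} :=
    fun a b x ω h => h.1
  have hsB : ∀ a b x, {ω | A ω = a ∧ B ω = b ∧ X ω = x} ⊆ {ω | B ω = b} :=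
    fun a b x ω h => h.2.1
  have hsXx : ∀ a b x, {ω | A ω = a ∧ B ω = b ∧ X ω = x} ⊆ {ω | X ω = x} :=
    fun a b x ω h => h.2.2
  have hsYy : ∀ a b y, {ω | A ω = a ∧ B ω = b ∧ Y ω = y} ⊆ {ω | Y ω = y} :=
    fun a b y ω h => h.2.2
  have hsAX : ∀ a b x, {ω | A ω = a ∧ B ω = b ∧ X ω = x} ⊆ {ω | A ω = a ∧ X ω = x} :=
    fun a b x ω h => ⟨h.1, h.2.2⟩
  have hsBX : ∀ a b x, {ω | A ω = a ∧ B ω = b ∧ X ω = x} ⊆ {ω | B ω = b ∧ X ω = x} :=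
    fun a b x ω h => ⟨h.2.1, h.2.2⟩
  have hsAY : ∀ a b y, {ω | A ω = a ∧ B ω = b ∧ Y ω = y} ⊆ {ω | A ω = a ∧ Y ω = y} :=
    fun a b y ω h => ⟨h.1, h.2.2⟩
  have hsBY : ∀ a b y, {ω | A ω = a ∧ B ω = b ∧ Y ω = y} ⊆ {ω | B ω = b ∧ Y ω = y} :=
    fun a b y ω h => ⟨h.2.1, h.2.2⟩
  -- pointwise rewrite of the summand as a logarithm
  have hcongr : ∑ a, ∑ b, ∑ x, ∑ y, ZYQ p A B X Y a b x y
        * (ZYH p A B a b + ZYF p A B X a b x + ZYF p A B Y a b y)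
      = ∑ a, ∑ b, ∑ x, ∑ y, ZYQ p A B X Y a b x y
        * Real.logb 2 (ZYT p A B X Y a b x y) := by
    refine Finset.sum_congr rfl fun a _ => Finset.sum_congr rfl fun b _ =>
      Finset.sum_congr rfl fun x _ => Finset.sum_congr rfl fun y _ => ?_
    rcases (hQ0 a b x y).lt_or_eq with hq | hq
    · obtain ⟨habx, haby, hab⟩ := hsupport a b x y hq
      have ha := lt_of_lt_of_le habx (pr_mono hp0 (hsA a b x))
      have hb := lt_of_lt_of_le habx (pr_mono hp0 (hsB a b x))
      have hx := lt_of_lt_of_le habx (pr_mono hp0 (hsXx a b x))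
      have hy := lt_of_lt_of_le haby (pr_mono hp0 (hsYy a b y))
      have hax := lt_of_lt_of_le habx (pr_mono hp0 (hsAX a b x))
      have hbx := lt_of_lt_of_le habx (pr_mono hp0 (hsBX a b x))
      have hay := lt_of_lt_of_le haby (pr_mono hp0 (hsAY a b y))
      have hby := lt_of_lt_of_le haby (pr_mono hp0 (hsBY a b y))
      congr 1
      rw [ZYT,
        Real.logb_div (mul_pos (mul_pos (mul_pos (mul_pos hab hax) hbx) hay) hby).ne'
          (mul_pos (mul_pos (mul_pos (mul_pos (mul_pos ha hb) habx) hx) haby) hy).ne',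
        Real.logb_mul (mul_pos (mul_pos (mul_pos hab hax) hbx) hay).ne' hby.ne',
        Real.logb_mul (mul_pos (mul_pos hab hax) hbx).ne' hay.ne',
        Real.logb_mul (mul_pos hab hax).ne' hbx.ne',
        Real.logb_mul hab.ne' hax.ne',
        Real.logb_mul (mul_pos (mul_pos (mul_pos (mul_pos ha hb) habx) hx) haby).ne' hy.ne',
        Real.logb_mul (mul_pos (mul_pos (mul_pos ha hb) habx) hx).ne' haby.ne',
        Real.logb_mul (mul_pos (mul_pos ha hb) habx).ne' hx.ne',
        Real.logb_mul (mul_pos ha hb).ne' habx.ne',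
        Real.logb_mul ha.ne' hb.ne']
      simp only [ZYH, ZYF]
      ring
    · rw [← hq, zero_mul, zero_mul]
  -- Jensen's inequality
  have htpos : ∀ a b x y, 0 < ZYQ p A B X Y a b x y → 0 < ZYT p A B X Y a b x y := by
    intro a b x y hq
    obtain ⟨habx, haby, hab⟩ := hsupport a b x y hq
    have ha := lt_of_lt_of_le habx (pr_mono hp0 (hsA a b x))
    have hb := lt_of_lt_of_le habx (pr_mono hp0 (hsB a b x))
    have hx := lt_of_lt_of_le habx (pr_mono hp0 (hsXx a b x))
    have hy := lt_of_lt_of_le haby (pr_mono hp0 (hsYy a b y))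
    have hax := lt_of_lt_of_le habx (pr_mono hp0 (hsAX a b x))
    have hbx := lt_of_lt_of_le habx (pr_mono hp0 (hsBX a b x))
    have hay := lt_of_lt_of_le haby (pr_mono hp0 (hsAY a b y))
    have hby := lt_of_lt_of_le haby (pr_mono hp0 (hsBY a b y))
    exact div_pos (mul_pos (mul_pos (mul_pos (mul_pos hab hax) hbx) hay) hby)
      (mul_pos (mul_pos (mul_pos (mul_pos (mul_pos ha hb) habx) hx) haby) hy)
  have hjen := jensen_logb4 (ZYQ p A B X Y) (ZYT p A B X Y) hQ0 hQ1 htpos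
  -- identify the sum inside the logarithm with the Δ sum of the statement
  have hDelta : ∑ a, ∑ b, ∑ x, ∑ y, ZYQ p A B X Y a b x y * ZYT p A B X Y a b x y
      = ∑ a : α, ∑ b : β, ∑ x : χ, ∑ y : υ,
        if 0 < pr p {ω | A ω = a ∧ B ω = b ∧ X ω = x} ∧
           0 < pr p {ω | A ω = a ∧ B ω = b ∧ Y ω = y} then
          pr p {ω | A ω = a ∧ X ω = x} * pr p {ω | A ω = a ∧ Y ω = y}
            * pr p {ω | B ω = b ∧ X ω = x} * pr p {ω | B ω = b ∧ Y ω = y}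
            / (pr p {ω | A ω = a} * pr p {ω | X ω = x} * pr p {ω | Y ω = y}
                * pr p {ω | B ω = b})
        else 0 := by
    refine Finset.sum_congr rfl fun a _ => Finset.sum_congr rfl fun b _ =>
      Finset.sum_congr rfl fun x _ => Finset.sum_congr rfl fun y _ => ?_
    by_cases hc : 0 < pr p {ω | A ω = a ∧ B ω = b ∧ X ω = x} ∧
        0 < pr p {ω | A ω = a ∧ B ω = b ∧ Y ω = y}
    · rw [if_pos hc]
      obtain ⟨habx, haby⟩ := hc
      have hab := lt_of_lt_of_le habx (pr_mono hp0 (hsubX a b x))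
      have ha := lt_of_lt_of_le habx (pr_mono hp0 (hsA a b x))
      have hb := lt_of_lt_of_le habx (pr_mono hp0 (hsB a b x))
      have hx := lt_of_lt_of_le habx (pr_mono hp0 (hsXx a b x))
      have hy := lt_of_lt_of_le haby (pr_mono hp0 (hsYy a b y))
      rw [ZYQ, if_pos hab, ZYT]
      field_simp
    · rw [if_neg hc]
      have hq0 : ZYQ p A B X Y a b x y = 0 := by
        rcases not_and_or.1 hc with h | h
        · have hz : pr p {ω | A ω = a ∧ B ω = b ∧ X ω = x} = 0 :=
            le_antisymm (not_lt.1 h) (pr_nonneg hp0 _)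
          rw [ZYQ]
          split
          · rw [hz, zero_mul, zero_div]
          · rfl
        · have hz : pr p {ω | A ω = a ∧ B ω = b ∧ Y ω = y} = 0 :=
            le_antisymm (not_lt.1 h) (pr_nonneg hp0 _)
          rw [ZYQ]
          split
          · rw [hz, mul_zero, zero_div]
          · rfl
      rw [hq0, zero_mul]
  have hfinal : mi p A B - cmi p A B X - cmi p A B Y
      ≤ Real.logb 2 (∑ a : α, ∑ b : β, ∑ x : χ, ∑ y : υ,
        if 0 < pr p {ω | A ω = a ∧ B ω = b ∧ X ω = x} ∧
           0 < pr p {ω | A ω = a ∧ B ω = b ∧ Y ω = y} then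
          pr p {ω | A ω = a ∧ X ω = x} * pr p {ω | A ω = a ∧ Y ω = y}
            * pr p {ω | B ω = b ∧ X ω = x} * pr p {ω | B ω = b ∧ Y ω = y}
            / (pr p {ω | A ω = a} * pr p {ω | X ω = x} * pr p {ω | Y ω = y}
                * pr p {ω | B ω = b})
        else 0) := by
    rw [hL1, hL2, hswap, hcongr, ← hDelta]
    exact hjen
  linarith
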